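/- arXiv:1505.03338 — 2 statements merged into one kernel-verified Lean document; each statement's English description precedes it below -/
import Mathlib

section
/- For the density function δ₁(a) = (4·sinh((1/2)·arccosh((2 - 2√(1-a²) - a² + 2a⁴)/(2a⁴))) + 2√(1-a²))/π defined for 0 < a < 1, the limit as a → 0⁺ is 3/π. -/
open Real Filter

/-- The inverse hyperbolic cosine on [1,∞). -/
noncomputable def arcosh (x : ℝ) : ℝ := Real.log (x + Real.sqrt (x^2 - 1))

/-- The density function of type-1 hyp-hor packings in the hyperbolic plane. -/
noncomputable def δ₁ (a : ℝ) : ℝ :=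
  (4 * Real.sinh ((1/2) * _root_.arcosh ((2 - 2 * Real.sqrt (1 - a^2) - a^2 + 2 * a^4) / (2 * a^4)))
    + 2 * Real.sqrt (1 - a^2)) / π

/-- The limit of `δ₁ a` as `a → 0⁺` is `3/π`. -/
theorem delta1_tendsto_zero :
    Tendsto δ₁ (nhdsWithin 0 (Set.Ioi 0)) (nhds (3 / π)) := by
  have h17 : Real.sqrt 17 ^ 2 = 17 := Real.sq_sqrt (by norm_num)
  have h17pos : (0:ℝ) < Real.sqrt 17 := Real.sqrt_pos.2 (by norm_num)
  have harc98 : _root_.arcosh (9/8) = Real.log ((9 + Real.sqrt 17)/8) := by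
    unfold _root_.arcosh
    have : Real.sqrt ((9/8:ℝ)^2 - 1) = Real.sqrt 17 / 8 := by
      rw [show ((9/8:ℝ)^2 - 1) = (Real.sqrt 17 / 8)^2 by rw [div_pow, div_pow, h17]; norm_num]
      exact Real.sqrt_sq (by positivity)
    rw [this]; ring_nf
  have hval : Real.sinh ((1/2) * _root_.arcosh (9/8)) = 1/4 := by
    rw [harc98]
    have hc : (0:ℝ) < (9 + Real.sqrt 17)/8 := by positivity
    have hsq : Real.sqrt ((9 + Real.sqrt 17)/8) = (1 + Real.sqrt 17)/4 := by
      rw [show (9 + Real.sqrt 17)/8 = ((1 + Real.sqrt 17)/4)^2 by nlinarith]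
      exact Real.sqrt_sq (by positivity)
    have hexp : Real.exp ((1/2) * Real.log ((9 + Real.sqrt 17)/8)) = (1 + Real.sqrt 17)/4 := by
      rw [show (1/2 : ℝ) * Real.log ((9 + Real.sqrt 17)/8)
            = Real.log ((9 + Real.sqrt 17)/8) * (1/2) by ring,
        ← Real.rpow_def_of_pos hc, ← Real.sqrt_eq_rpow, hsq]
    rw [Real.sinh_eq, Real.exp_neg, hexp]
    have hne : (1 + Real.sqrt 17)/4 ≠ 0 := by positivity
    field_simp
    nlinarith
  have hs : Tendsto (fun a : ℝ => Real.sqrt (1 - a^2)) (nhdsWithin 0 (Set.Ioi 0)) (nhds 1) := by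
    have hca : ContinuousAt (fun a : ℝ => Real.sqrt (1 - a^2)) 0 := by fun_prop
    have := hca.tendsto.mono_left (nhdsWithin_le_nhds (s := Set.Ioi (0:ℝ)))
    simpa using this
  have hu : Tendsto (fun a : ℝ => 1 + 1/(2*(1 + Real.sqrt (1 - a^2))^2))
      (nhdsWithin 0 (Set.Ioi 0)) (nhds (9/8)) := by
    have hc1 : ContinuousAt (fun s : ℝ => 1 + 1/(2*(1+s)^2)) 1 := by
      apply ContinuousAt.add continuousAt_const
      apply ContinuousAt.div continuousAt_const (by fun_prop)
      norm_num
    have h98 : (1:ℝ) + 1/(2*(1+1)^2) = 9/8 := by norm_num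
    have h2 := hc1.tendsto.comp hs
    rw [h98] at h2
    exact h2
  have harcca : ContinuousAt _root_.arcosh (9/8) := by
    unfold _root_.arcosh
    have hpos : (0:ℝ) < 9/8 + Real.sqrt ((9/8:ℝ)^2 - 1) := by positivity
    exact ContinuousAt.log (by fun_prop) (ne_of_gt hpos)
  have hg : Tendsto (fun a : ℝ =>
      (4 * Real.sinh ((1/2) * _root_.arcosh (1 + 1/(2*(1 + Real.sqrt (1 - a^2))^2)))
        + 2 * Real.sqrt (1 - a^2)) / π)
      (nhdsWithin 0 (Set.Ioi 0)) (nhds (3/π)) := by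
    have h1 : Tendsto (fun a : ℝ =>
        Real.sinh ((1/2) * _root_.arcosh (1 + 1/(2*(1 + Real.sqrt (1 - a^2))^2))))
        (nhdsWithin 0 (Set.Ioi 0)) (nhds (1/4)) := by
      have hca2 : ContinuousAt (fun x : ℝ => Real.sinh ((1/2) * _root_.arcosh x)) (9/8) :=
        Real.continuous_sinh.continuousAt.comp (continuousAt_const.mul harcca)
      have := hca2.tendsto.comp hu
      simp only [Function.comp_def] at this
      rw [hval] at this
      exact this
    have h2 := (((tendsto_const_nhds (x := (4:ℝ))).mul h1).add
      ((tendsto_const_nhds (x := (2:ℝ))).mul hs)).div_const π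
    convert h2 using 2
    norm_num
  apply hg.congr'
  filter_upwards [Ioo_mem_nhdsGT_of_mem (show (0:ℝ) ∈ Set.Ico (0:ℝ) 1 by norm_num)] with a ha
  obtain ⟨ha0, ha1⟩ := ha
  have ha2 : (0:ℝ) ≤ 1 - a^2 := by nlinarith
  set s := Real.sqrt (1 - a^2) with hsdef
  have hs2 : s^2 = 1 - a^2 := Real.sq_sqrt ha2
  have hsnn : 0 ≤ s := Real.sqrt_nonneg _
  have hane : a ≠ 0 := ne_of_gt ha0
  have hsne : (1 + s) ≠ 0 := by positivity
  have key : 1 + 1/(2*(1 + s)^2) = (2 - 2*s - a^2 + 2*a^4) / (2*a^4) := by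
    field_simp
    nlinarith [hs2, sq_nonneg (1+s)]
  unfold δ₁
  rw [key]
end

section
/- For all a with 0 < a < 1, the function δ₁(a) = (4·sinh((1/2)·arccosh((2 - 2√(1-a²) - a² + 2a⁴)/(2a⁴))) + 2√(1-a²))/π satisfies 2/π < δ₁(a) < 3/π. -/
open Real

lemma cosh_arcosh {x : ℝ} (hx : 1 ≤ x) : Real.cosh (_root_.arcosh x) = x := by
  have h1 : (0:ℝ) ≤ x^2 - 1 := by nlinarith
  have hs : Real.sqrt (x^2-1) ^ 2 = x^2 - 1 := Real.sq_sqrt h1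
  have hy : 0 < x + Real.sqrt (x^2 - 1) := by
    have := Real.sqrt_nonneg (x^2-1); linarith
  have hmul : (x + Real.sqrt (x^2-1)) * (x - Real.sqrt (x^2-1)) = 1 := by nlinarith [hs]
  have hinv : (x + Real.sqrt (x^2-1))⁻¹ = x - Real.sqrt (x^2-1) :=
    inv_eq_of_mul_eq_one_right hmul
  rw [_root_.arcosh, Real.cosh_eq, Real.exp_log hy, Real.exp_neg, Real.exp_log hy, hinv]
  ring

lemma arcosh_nonneg {x : ℝ} (hx : 1 ≤ x) : 0 ≤ _root_.arcosh x := by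
  apply Real.log_nonneg
  have := Real.sqrt_nonneg (x^2-1); linarith

lemma sinh_half_arcosh {x : ℝ} (hx : 1 ≤ x) :
    Real.sinh ((1/2) * _root_.arcosh x) = Real.sqrt ((x-1)/2) := by
  set u := (1/2) * _root_.arcosh x with hu
  have hun : 0 ≤ u := by
    have := _root_.arcosh_nonneg hx; rw [hu]; linarith
  have hsn : 0 ≤ Real.sinh u := by
    rw [← Real.sinh_zero]; exact Real.sinh_le_sinh.2 hun
  have h2u : Real.cosh (2 * u) = x := by
    rw [show 2 * u = _root_.arcosh x by rw [hu]; ring]; exact _root_.cosh_arcosh hx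
  have hsq : Real.sinh u ^ 2 = (x - 1) / 2 := by
    have hc2 : Real.cosh (2*u) = Real.cosh u ^ 2 + Real.sinh u ^ 2 := Real.cosh_two_mul u
    have hcs : Real.cosh u ^ 2 = Real.sinh u ^ 2 + 1 := Real.cosh_sq u
    nlinarith [hc2, hcs, h2u]
  rw [← hsq, Real.sqrt_sq hsn]

/-- For `0 < a < 1` we have `2/π < δ₁ a < 3/π`. -/
theorem delta1_bounds (a : ℝ) (h0 : 0 < a) (h1 : a < 1) :
    2 / π < δ₁ a ∧ δ₁ a < 3 / π := by
  have ha2 : 0 < a^2 := by positivity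
  have ha2' : a^2 < 1 := by nlinarith
  set s := Real.sqrt (1 - a^2) with hsdef
  have hs2 : s ^ 2 = 1 - a^2 := Real.sq_sqrt (by linarith)
  have hs0 : 0 < s := Real.sqrt_pos.2 (by linarith)
  have hs1 : s < 1 := by nlinarith [hs2]
  set X := (2 - 2 * s - a^2 + 2 * a^4) / (2 * a^4) with hX
  have ha4 : 0 < a^4 := by positivity
  have hXval : X = 1 + (1-s)^2 / (2*a^4) := by
    rw [hX]; field_simp; nlinarith [hs2]
  have hX1 : 1 ≤ X := by
    rw [hXval]
    have : 0 ≤ (1-s)^2 / (2*a^4) := by positivity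
    linarith
  have hsinh : Real.sinh ((1/2) * _root_.arcosh X) = (1-s)/(2*a^2) := by
    rw [_root_.sinh_half_arcosh hX1]
    have h1 : (X - 1)/2 = ((1-s)/(2*a^2))^2 := by
      rw [hXval, show (1 + (1-s)^2/(2*a^4) - 1) = (1-s)^2/(2*a^4) by ring,
        div_pow, div_div]
      congr 1
      ring
    rw [h1, Real.sqrt_sq (div_nonneg (by linarith) (by positivity))]
  have hpi : 0 < π := Real.pi_pos
  have hδ : δ₁ a = (4 * ((1-s)/(2*a^2)) + 2*s) / π := by
    unfold δ₁
    rw [← hsdef, ← hX, hsinh]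
  have hrw : 4 * ((1-s)/(2*a^2)) + 2*s = (2*(1-s) + 2*s*a^2)/a^2 := by
    field_simp; ring
  constructor
  · rw [hδ, div_lt_div_iff₀ hpi hpi]
    have key : 2 < 4 * ((1-s)/(2*a^2)) + 2*s := by
      rw [hrw, lt_div_iff₀ ha2]
      nlinarith [mul_pos (mul_pos hs0 hs0) (sub_pos.2 hs1), hs2]
    nlinarith [key, hpi]
  · rw [hδ, div_lt_div_iff₀ hpi hpi]
    have key : 4 * ((1-s)/(2*a^2)) + 2*s < 3 := by
      rw [hrw, div_lt_iff₀ ha2]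
      nlinarith [mul_pos (pow_pos (sub_pos.2 hs1) 2) (show (0:ℝ) < 1 + 2*s by linarith), hs2]
    nlinarith [key, hpi]
end
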